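/- Fix c₀ > 0 and ε ∈ {+1,−1}, and let (T, e₁, e₂) : ℝ → (ℝ³)³ be the unique solution of the linear ODE system T′(s) = c₀ e₁(s), e₁′(s) = −ε c₀ T(s) + (s/2) e₂(s), e₂′(s) = −(s/2) e₁(s) with initial conditions T(0) = (0,0,1), e₁(0) = (1,0,0), e₂(0) = (0,1,0). Then for every s ∈ ℝ: T(−s) = (−T₁(s), −T₂(s), T₃(s)), e₁(−s) = (e₁,₁(s), e₁,₂(s), −e₁,₃(s)), and e₂(−s) = (e₂,₁(s), e₂,₂(s), −e₂,₃(s)), where subscripts denote the components of the vectors. -/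

import Mathlib

open MeasureTheory Set Filter Topology

noncomputable section

/-- Generalized cross product `a ∧_ε b` on ℝ³ (ε = 1: Euclidean, ε = -1: hyperbolic). -/
def wedge (ε : ℝ) (a b : Fin 3 → ℝ) : Fin 3 → ℝ :=
  ![a 1 * b 2 - a 2 * b 1, a 2 * b 0 - a 0 * b 2, ε * (a 0 * b 1 - a 1 * b 0)]

/-- Generalized scalar product `a ∘_ε b` on ℝ³. -/
def circ (ε : ℝ) (a b : Fin 3 → ℝ) : ℝ :=
  a 0 * b 0 + a 1 * b 1 + ε * (a 2 * b 2)

/-- Euclidean norm on ℝ³. -/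
def norm3 (a : Fin 3 → ℝ) : ℝ := Real.sqrt (a 0 ^ 2 + a 1 ^ 2 + a 2 ^ 2)

/-- `G(s) = 2c₀·(0,1,0) + ∫₀ˢ T(σ) dσ`. -/
def Gfun (c₀ : ℝ) (T : ℝ → Fin 3 → ℝ) (s : ℝ) : Fin 3 → ℝ :=
  (2 * c₀) • ![0, 1, 0] + ∫ σ in (0:ℝ)..s, T σ

/-- The self-similar profile `X_{c₀}(s,t) = √t · G(s/√t)`. -/
def Xfun (c₀ : ℝ) (T : ℝ → Fin 3 → ℝ) (s t : ℝ) : Fin 3 → ℝ :=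
  Real.sqrt t • Gfun c₀ T (s / Real.sqrt t)


abbrev E3 := (Fin 3 → ℝ) × ((Fin 3 → ℝ) × (Fin 3 → ℝ))

def refl1 (a : Fin 3 → ℝ) : Fin 3 → ℝ := ![-(a 0), -(a 1), a 2]
def refl2 (a : Fin 3 → ℝ) : Fin 3 → ℝ := ![a 0, a 1, -(a 2)]

lemma continuous_refl1 : Continuous refl1 := by
  apply continuous_pi; intro i
  fin_cases i <;> simp [refl1] <;> fun_prop

lemma continuous_refl2 : Continuous refl2 := by
  apply continuous_pi; intro i
  fin_cases i <;> simp [refl2] <;> fun_prop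

lemma refl1_refl1 (a : Fin 3 → ℝ) : refl1 (refl1 a) = a := by
  funext i; fin_cases i <;> simp [refl1]

lemma refl2_refl2 (a : Fin 3 → ℝ) : refl2 (refl2 a) = a := by
  funext i; fin_cases i <;> simp [refl2]

lemma hasDerivAt_refl1 {F : ℝ → Fin 3 → ℝ} {D : Fin 3 → ℝ} {t : ℝ} (h : HasDerivAt F D t) :
    HasDerivAt (fun u => refl1 (F u)) (refl1 D) t := by
  rw [hasDerivAt_pi] at h ⊢
  intro i
  fin_cases i <;> simp only [refl1, Matrix.cons_val_zero, Matrix.cons_val_one, Matrix.head_cons,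
    Matrix.cons_val_two, Matrix.tail_cons, Fin.isValue]
  · exact (h 0).neg
  · exact (h 1).neg
  · exact h 2

lemma hasDerivAt_refl2 {F : ℝ → Fin 3 → ℝ} {D : Fin 3 → ℝ} {t : ℝ} (h : HasDerivAt F D t) :
    HasDerivAt (fun u => refl2 (F u)) (refl2 D) t := by
  rw [hasDerivAt_pi] at h ⊢
  intro i
  fin_cases i <;> simp only [refl2, Matrix.cons_val_zero, Matrix.cons_val_one, Matrix.head_cons,
    Matrix.cons_val_two, Matrix.tail_cons, Fin.isValue]
  · exact h 0
  · exact h 1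
  · exact (h 2).neg

lemma hasDerivAt_comp_neg {F : ℝ → Fin 3 → ℝ} {D : Fin 3 → ℝ} {t : ℝ}
    (h : HasDerivAt F D (-t)) : HasDerivAt (fun u => F (-u)) (-D) t := by
  simpa [Function.comp_def] using h.scomp t (hasDerivAt_neg t)

def vfield (c₀ ε b : ℝ) (t : ℝ) (p : E3) : E3 :=
  (c₀ • p.2.1,
   ((-(ε * c₀)) • p.1 + (max (-b) (min b t) / 2) • p.2.2,
    (-(max (-b) (min b t) / 2)) • p.2.1))

lemma vfield_sub (c₀ ε b t : ℝ) (p q : E3) :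
    vfield c₀ ε b t p - vfield c₀ ε b t q = vfield c₀ ε b t (p - q) := by
  simp [vfield, Prod.ext_iff, smul_sub]
  module

lemma vfield_lip (c₀ ε b : ℝ) (t : ℝ) :
    LipschitzWith (|c₀| + |ε * c₀| + |b|).toNNReal (vfield c₀ ε b t) := by
  apply LipschitzWith.of_dist_le_mul
  intro p q
  rw [dist_eq_norm, dist_eq_norm, vfield_sub]
  set r := p - q with hr
  have hK : ((|c₀| + |ε * c₀| + |b|).toNNReal : ℝ) = |c₀| + |ε * c₀| + |b| := by
    rw [Real.coe_toNNReal]; positivity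
  rw [hK]
  have hκ : |max (-b) (min b t) / 2| ≤ |b| := by
    rw [abs_div]
    have h1 : max (-b) (min b t) ≤ |b| := by
      apply max_le (neg_le_abs b) (le_trans (min_le_left _ _) (le_abs_self b))
    have h2 : -|b| ≤ max (-b) (min b t) := le_trans (neg_le_neg (le_abs_self b)) (le_max_left _ _)
    have h3 : |max (-b) (min b t)| ≤ |b| := abs_le.mpr ⟨h2, h1⟩
    have : |(2:ℝ)| = 2 := by norm_num
    rw [this]; linarith [abs_nonneg b]
  have h1 : ‖r.1‖ ≤ ‖r‖ := norm_fst_le r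
  have h21 : ‖r.2.1‖ ≤ ‖r‖ := le_trans (norm_fst_le r.2) (norm_snd_le r)
  have h22 : ‖r.2.2‖ ≤ ‖r‖ := le_trans (norm_snd_le r.2) (norm_snd_le r)
  have hrn : (0:ℝ) ≤ ‖r‖ := norm_nonneg r
  rw [Prod.norm_def, Prod.norm_def]
  simp only [vfield]
  apply max_le
  · rw [norm_smul]
    have : ‖c₀‖ * ‖r.2.1‖ ≤ |c₀| * ‖r‖ := by
      rw [Real.norm_eq_abs]; exact mul_le_mul_of_nonneg_left h21 (abs_nonneg _)
    nlinarith [abs_nonneg (ε*c₀), abs_nonneg b]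
  · apply max_le
    · calc ‖(-(ε * c₀)) • r.1 + (max (-b) (min b t) / 2) • r.2.2‖
          ≤ ‖(-(ε * c₀)) • r.1‖ + ‖(max (-b) (min b t) / 2) • r.2.2‖ := norm_add_le _ _
        _ ≤ |ε * c₀| * ‖r‖ + |b| * ‖r‖ := by
            rw [norm_smul, norm_smul, Real.norm_eq_abs, Real.norm_eq_abs, abs_neg]
            gcongr
        _ ≤ (|c₀| + |ε * c₀| + |b|) * ‖r‖ := by nlinarith [abs_nonneg c₀]
    · rw [norm_smul, Real.norm_eq_abs, abs_neg]
      nlinarith [abs_nonneg c₀, abs_nonneg (ε*c₀), mul_le_mul_of_nonneg_right hκ hrn,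
        mul_le_mul_of_nonneg_left h21 (abs_nonneg (max (-b) (min b t) / 2)),
        abs_nonneg (max (-b) (min b t) / 2)]

theorem stmt7 (c₀ ε : ℝ) (hc₀ : 0 < c₀) (hε : ε = 1 ∨ ε = -1)
    (T e₁ e₂ : ℝ → Fin 3 → ℝ)
    (hT : ∀ s, HasDerivAt T (c₀ • e₁ s) s)
    (he₁ : ∀ s, HasDerivAt e₁ ((-(ε * c₀)) • T s + (s / 2) • e₂ s) s)
    (he₂ : ∀ s, HasDerivAt e₂ ((-(s / 2)) • e₁ s) s)
    (hT0 : T 0 = ![0, 0, 1])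
    (he₁0 : e₁ 0 = ![1, 0, 0])
    (he₂0 : e₂ 0 = ![0, 1, 0]) :
    ∀ s : ℝ,
      T (-s) = ![-(T s 0), -(T s 1), T s 2] ∧
      e₁ (-s) = ![e₁ s 0, e₁ s 1, -(e₁ s 2)] ∧
      e₂ (-s) = ![e₂ s 0, e₂ s 1, -(e₂ s 2)] := by
  intro s₀
  set b : ℝ := |s₀| + 1 with hb
  have hb0 : 0 < b := by positivity
  have hTc : Continuous T := continuous_iff_continuousAt.mpr fun t => (hT t).continuousAt
  have he₁c : Continuous e₁ := continuous_iff_continuousAt.mpr fun t => (he₁ t).continuousAt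
  have he₂c : Continuous e₂ := continuous_iff_continuousAt.mpr fun t => (he₂ t).continuousAt
  have key : EqOn (fun t => ((T t, (e₁ t, e₂ t)) : E3))
      (fun t => ((refl1 (T (-t)), (refl2 (e₁ (-t)), refl2 (e₂ (-t)))) : E3)) (Icc (-b) b) := by
    apply ODE_solution_unique_of_mem_Icc (v := vfield c₀ ε b)
      (fun t _ => (vfield_lip c₀ ε b t).lipschitzOnWith) (s := fun _ => (univ : Set E3))
      (t₀ := (0:ℝ))
    · exact ⟨by linarith, hb0⟩
    · exact (hTc.prodMk (he₁c.prodMk he₂c)).continuousOn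
    · intro t ht
      have hproj : max (-b) (min b t) = t := by
        rw [min_eq_right ht.2.le, max_eq_right ht.1.le]
      refine ((hT t).prodMk ((he₁ t).prodMk (he₂ t))).congr_deriv ?_
      simp [vfield, hproj]
    · intro t _; trivial
    · refine Continuous.continuousOn ?_
      exact ((continuous_refl1.comp (hTc.comp continuous_neg)).prodMk
        ((continuous_refl2.comp (he₁c.comp continuous_neg)).prodMk
          (continuous_refl2.comp (he₂c.comp continuous_neg))))
    · intro t ht
      have hproj : max (-b) (min b t) = t := by
        rw [min_eq_right ht.2.le, max_eq_right ht.1.le]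
      have g₁ := hasDerivAt_refl1 (hasDerivAt_comp_neg (hT (-t)))
      have g₂ := hasDerivAt_refl2 (hasDerivAt_comp_neg (he₁ (-t)))
      have g₃ := hasDerivAt_refl2 (hasDerivAt_comp_neg (he₂ (-t)))
      refine (g₁.prodMk (g₂.prodMk g₃)).congr_deriv ?_
      simp only [vfield, hproj, Prod.mk.injEq]
      refine ⟨?_, ?_, ?_⟩ <;> funext i <;> fin_cases i <;>
        simp [refl1, refl2, Pi.smul_apply, Pi.add_apply, Pi.neg_apply, smul_eq_mul] <;> ring
    · intro t _; trivial
    · simp only [neg_zero, hT0, he₁0, he₂0, Prod.mk.injEq]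
      refine ⟨?_, ?_, ?_⟩ <;> funext i <;> fin_cases i <;> simp [refl1, refl2]
  have hs₀ : s₀ ∈ Icc (-b) b := by
    constructor
    · have := neg_abs_le s₀; linarith
    · have := le_abs_self s₀; linarith
  have hfg := key hs₀
  simp only [Prod.mk.injEq] at hfg
  obtain ⟨h1, h2, h3⟩ := hfg
  refine ⟨?_, ?_, ?_⟩
  · show T (-s₀) = refl1 (T s₀)
    rw [h1, refl1_refl1]
  · show e₁ (-s₀) = refl2 (e₁ s₀)
    rw [h2, refl2_refl2]
  · show e₂ (-s₀) = refl2 (e₂ s₀)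
    rw [h3, refl2_refl2]
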